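/- Let I be a general ring and a ∈ QN(I). Then both a and -a are quasiregular, i.e., a, -a ∈ Q(I), and moreover -a ∈ QN(I). Consequently QN(I) ⊆ Q(I). -/

import Mathlib

variable {I : Type*} [NonUnitalRing I]

/-- quasiregular elements: p * q = 0 = q * p with p*q = p+q-pq -/
def inQ (a : I) : Prop := ∃ p : I, p + a - p * a = 0 ∧ a + p - a * p = 0

def inQN (a : I) : Prop := ∀ x : I, a * x = x * a → inQ (a * x)

def inComm2 (a x : I) : Prop := ∀ y : I, y * a = a * y → x * y = y * x

def IsQuasipolarElem (a : I) : Prop :=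
  ∃ p : I, p * p = p ∧ inComm2 a p ∧ inQ (a + p) ∧ inQN (a - a * p)

/-- pw a n = a^(n+1) -/
def pw (a : I) : ℕ → I
  | 0 => a
  | n + 1 => pw a n * a

def IsSPiReg (a : I) : Prop := ∃ n : ℕ, ∃ x : I, a * x = x * a ∧ pw a n = pw a (n + 1) * x

def IsNilp (a : I) : Prop := ∃ n : ℕ, pw a n = 0

def IsStrReg (a : I) : Prop := ∃ b : I, a * b = b * a ∧ a = a * b * a

lemma inQ_iff_isUnit (a : I) : inQ a ↔ IsUnit (1 - (a : Unitization ℤ I)) := by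
  constructor
  · rintro ⟨p, h1, h2⟩
    refine isUnit_iff_exists.2 ⟨1 - (p : Unitization ℤ I), ?_, ?_⟩
    · have e : (1 - (a : Unitization ℤ I)) * (1 - (p : Unitization ℤ I))
          = 1 - ((a + p - a * p : I) : Unitization ℤ I) := by
        simp only [Unitization.inr_add, Unitization.inr_sub, Unitization.inr_mul]
        noncomm_ring
      rw [e, h2]; simp
    · have e : (1 - (p : Unitization ℤ I)) * (1 - (a : Unitization ℤ I))
          = 1 - ((p + a - p * a : I) : Unitization ℤ I) := by
        simp only [Unitization.inr_add, Unitization.inr_sub, Unitization.inr_mul]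
        noncomm_ring
      rw [e, h1]; simp
  · rintro ⟨u, hu⟩
    have hl : (↑u⁻¹ : Unitization ℤ I) * (1 - (a : Unitization ℤ I)) = 1 := by
      rw [← hu]; exact u.inv_mul
    have hr : (1 - (a : Unitization ℤ I)) * (↑u⁻¹ : Unitization ℤ I) = 1 := by
      rw [← hu]; exact u.mul_inv
    have hfst : (↑u⁻¹ : Unitization ℤ I).fst = 1 := by
      have hsub : ((1 : Unitization ℤ I) - (a : Unitization ℤ I)).fst = 1 := by
        rw [sub_eq_add_neg]; simp
      have := congrArg (fun x : Unitization ℤ I => x.fst) hl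
      simpa [Unitization.fst_mul, hsub] using this
    have hv : (↑u⁻¹ : Unitization ℤ I) = 1 + ((↑u⁻¹ : Unitization ℤ I).snd : Unitization ℤ I) := by
      conv_lhs => rw [← Unitization.inl_fst_add_inr_snd_eq (↑u⁻¹ : Unitization ℤ I)]
      rw [hfst]; simp [Unitization.inl_one]
    set s : I := (↑u⁻¹ : Unitization ℤ I).snd with hs
    refine ⟨-s, ?_, ?_⟩
    · apply Unitization.inr_injective (R := ℤ)
      have h' := hl
      rw [hv] at h'
      calc ((-s + a - (-s) * a : I) : Unitization ℤ I)
          = -((1 + (s : Unitization ℤ I)) * (1 - (a : Unitization ℤ I)) - 1) := by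
            simp only [Unitization.inr_add, Unitization.inr_sub, Unitization.inr_mul,
              Unitization.inr_neg]
            noncomm_ring
        _ = ((0 : I) : Unitization ℤ I) := by rw [h']; simp
    · apply Unitization.inr_injective (R := ℤ)
      have h' := hr
      rw [hv] at h'
      calc ((a + -s - a * (-s) : I) : Unitization ℤ I)
          = -((1 - (a : Unitization ℤ I)) * (1 + (s : Unitization ℤ I)) - 1) := by
            simp only [Unitization.inr_add, Unitization.inr_sub, Unitization.inr_mul,
              Unitization.inr_neg]
            noncomm_ring
        _ = ((0 : I) : Unitization ℤ I) := by rw [h']; simp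

lemma commute_isUnit_left {R : Type*} [Ring R] {x y : R} (hc : x * y = y * x)
    (hu : IsUnit (x * y)) : IsUnit x := by
  obtain ⟨u, hu⟩ := hu
  have hcx : Commute x ↑u := by
    rw [Commute, SemiconjBy, hu]
    rw [hc, ← mul_assoc, hc]
  have hinv := hcx.units_inv_right
  refine isUnit_iff_exists.2 ⟨↑u⁻¹ * y, ?_, ?_⟩
  · rw [← mul_assoc, hinv.eq, mul_assoc, ← hu, Units.inv_mul]
  · rw [mul_assoc, ← hc, ← hu, Units.inv_mul]

lemma inQN_to_inQ (a : I) (h : inQN a) : inQ a ∧ inQ (-a) := by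
  have h2 : inQ (a * a) := h a rfl
  rw [inQ_iff_isUnit] at h2
  have e1 : (1 : Unitization ℤ I) - ((a*a : I) : Unitization ℤ I)
      = (1 - (a:Unitization ℤ I)) * (1 + (a:Unitization ℤ I)) := by
    simp only [Unitization.inr_mul]; noncomm_ring
  have e2 : (1 : Unitization ℤ I) - ((a*a : I) : Unitization ℤ I)
      = (1 + (a:Unitization ℤ I)) * (1 - (a:Unitization ℤ I)) := by
    simp only [Unitization.inr_mul]; noncomm_ring
  have hc : (1 - (a:Unitization ℤ I)) * (1 + (a:Unitization ℤ I))
      = (1 + (a:Unitization ℤ I)) * (1 - (a:Unitization ℤ I)) := by noncomm_ring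
  constructor
  · rw [inQ_iff_isUnit]
    exact commute_isUnit_left (R := Unitization ℤ I) hc (e1 ▸ h2)
  · rw [inQ_iff_isUnit]
    have : IsUnit (1 + (a:Unitization ℤ I)) :=
      commute_isUnit_left (R := Unitization ℤ I) hc.symm (e2 ▸ h2)
    simpa [sub_neg_eq_add, Unitization.inr_neg] using this

theorem stmt2 (a : I) (h : inQN a) : inQ a ∧ inQ (-a) ∧ inQN (-a) := by
  have hneg : inQN (-a) := by
    intro x hx
    have hx' : a * (-x) = (-x) * a := by
      simp only [mul_neg, neg_mul] at hx ⊢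
      exact hx
    have := h (-x) hx'
    simpa [mul_neg, neg_mul] using this
  exact ⟨(inQN_to_inQ a h).1, (inQN_to_inQ a h).2, hneg⟩
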